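/- arXiv:1706.10222 — 2 statements merged into one kernel-verified Lean document; each statement's English description precedes it below -/
import Mathlib

section
/- Let A be a discrete valuation ring with fraction field K, uniformizer π, and residue field k. Then K^M_n(K) is generated as an abelian group by symbols of the form {π, u_2, ..., u_n} and {u_1, u_2, ..., u_n} where all u_i are units of A. -/
/-- The set of relations defining Milnor K-theory: multilinearity relations and
Steinberg relations, inside the free abelian group on `n`-tuples of units. -/
def MilnorRelSet (F : Type*) [Field F] (n : ℕ) : Set (FreeAbelianGroup (Fin n → Fˣ)) :=
  { x | ∃ (a : Fin n → Fˣ) (i : Fin n) (b : Fˣ),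
      x = FreeAbelianGroup.of (Function.update a i (a i * b)) -
          FreeAbelianGroup.of a - FreeAbelianGroup.of (Function.update a i b) } ∪
  { x | ∃ (a : Fin n → Fˣ) (i j : Fin n), i ≠ j ∧ ((a i : F) + (a j : F) = 1) ∧
      x = FreeAbelianGroup.of a }

/-- The `n`-th Milnor K-group of a field `F`. -/
def MilnorK (n : ℕ) (F : Type*) [Field F] : Type _ :=
  FreeAbelianGroup (Fin n → Fˣ) ⧸ AddSubgroup.closure (MilnorRelSet F n)

instance (n : ℕ) (F : Type*) [Field F] : AddCommGroup (MilnorK n F) :=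
  QuotientAddGroup.Quotient.addCommGroup _

/-- The symbol `{a 0, ..., a (n-1)}` in Milnor K-theory. -/
def MilnorSymbol {n : ℕ} {F : Type*} [Field F] (a : Fin n → Fˣ) : MilnorK n F :=
  QuotientAddGroup.mk (FreeAbelianGroup.of a)

section Lemmas
variable {F : Type*} [Field F] {n : ℕ}

lemma milnor_rel_zero {x : FreeAbelianGroup (Fin n → Fˣ)} (h : x ∈ MilnorRelSet F n) :
    (QuotientAddGroup.mk x : MilnorK n F) = 0 :=
  (QuotientAddGroup.eq_zero_iff x).2 (AddSubgroup.subset_closure h)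

lemma MilnorSymbol_mul (a : Fin n → Fˣ) (i : Fin n) (x y : Fˣ) :
    MilnorSymbol (Function.update a i (x * y)) =
      (MilnorSymbol (Function.update a i x) : MilnorK n F) +
        MilnorSymbol (Function.update a i y) := by
  have h := milnor_rel_zero (F := F) (n := n)
    (Or.inl ⟨Function.update a i x, i, y, rfl⟩)
  rw [QuotientAddGroup.mk_sub, QuotientAddGroup.mk_sub, sub_sub, sub_eq_zero] at h
  simp only [Function.update_self, Function.update_idem] at h
  exact h

lemma MilnorSymbol_steinberg (a : Fin n → Fˣ) {i j : Fin n} (hij : i ≠ j)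
    (h : (a i : F) + (a j : F) = 1) : MilnorSymbol a = (0 : MilnorK n F) :=
  milnor_rel_zero (Or.inr ⟨a, i, j, hij, h, rfl⟩)

lemma MilnorSymbol_update_one (a : Fin n → Fˣ) (i : Fin n) :
    MilnorSymbol (Function.update a i 1) = (0 : MilnorK n F) := by
  have h := MilnorSymbol_mul a i 1 1
  rw [mul_one] at h
  exact right_eq_add.mp h

lemma MilnorSymbol_update_inv (a : Fin n → Fˣ) (i : Fin n) (x : Fˣ) :
    MilnorSymbol (Function.update a i x⁻¹) =
      -(MilnorSymbol (Function.update a i x) : MilnorK n F) := by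
  have h := MilnorSymbol_mul a i x x⁻¹
  rw [mul_inv_cancel, MilnorSymbol_update_one] at h
  exact eq_neg_of_add_eq_zero_right h.symm

lemma MilnorSymbol_update_pow (a : Fin n → Fˣ) (i : Fin n) (x : Fˣ) (m : ℕ) :
    MilnorSymbol (Function.update a i (x ^ m)) =
      m • (MilnorSymbol (Function.update a i x) : MilnorK n F) := by
  induction m with
  | zero => simpa using MilnorSymbol_update_one a i
  | succ m ih => rw [pow_succ, MilnorSymbol_mul, ih, succ_nsmul]

lemma MilnorSymbol_update_zpow (a : Fin n → Fˣ) (i : Fin n) (x : Fˣ) (m : ℤ) :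
    MilnorSymbol (Function.update a i (x ^ m)) =
      m • (MilnorSymbol (Function.update a i x) : MilnorK n F) := by
  cases m with
  | ofNat m =>
      simpa [zpow_natCast] using MilnorSymbol_update_pow a i x m
  | negSucc m =>
      rw [zpow_negSucc, MilnorSymbol_update_inv, MilnorSymbol_update_pow, negSucc_zsmul]

lemma MilnorSymbol_self_neg (a : Fin n → Fˣ) {i j : Fin n} (hij : i ≠ j) (x : Fˣ) :
    MilnorSymbol (Function.update (Function.update a i x) j (-x)) = (0 : MilnorK n F) := by
  by_cases hx : x = 1
  · subst hx
    rw [Function.update_comm hij]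
    exact MilnorSymbol_update_one _ _
  · have hx1 : (x : F) ≠ 1 := fun h => hx (Units.ext h)
    have hv1 : ((x⁻¹ : Fˣ) : F) ≠ 1 := fun h => hx (inv_eq_one.mp (Units.ext h))
    have h1 : (1 : F) - (x : F) ≠ 0 := sub_ne_zero.2 (Ne.symm hx1)
    have h2 : (1 : F) - ((x⁻¹ : Fˣ) : F) ≠ 0 := sub_ne_zero.2 (Ne.symm hv1)
    set u : Fˣ := Units.mk0 _ h1 with hu
    set v : Fˣ := Units.mk0 _ h2 with hv
    have hx0 : (x : F) ≠ 0 := Units.ne_zero x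
    have key : -x = u * v⁻¹ := by
      apply Units.ext
      rw [Units.val_mul, hu, hv]
      have hxm1 : (x : F) - 1 ≠ 0 := sub_ne_zero.2 hx1
      simp only [Units.val_neg, Units.val_mk0, Units.val_inv_eq_inv_val]
      rw [show (1 : F) - (x : F)⁻¹ = ((x : F) - 1) / x by field_simp]
      rw [inv_div]
      field_simp
      ring
    rw [key, MilnorSymbol_mul, MilnorSymbol_update_inv]
    have e1 : MilnorSymbol (Function.update (Function.update a i x) j u) = (0 : MilnorK n F) := by
      apply MilnorSymbol_steinberg _ hij
      rw [Function.update_of_ne hij, Function.update_self, Function.update_self, hu]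
      simp
    have e2 : MilnorSymbol (Function.update (Function.update a i x) j v) = (0 : MilnorK n F) := by
      rw [Function.update_comm hij]
      conv_lhs => rw [show x = (x⁻¹)⁻¹ from (inv_inv x).symm]
      rw [MilnorSymbol_update_inv]
      rw [neg_eq_zero]
      apply MilnorSymbol_steinberg _ hij
      simp only [Function.update_self, Function.update_of_ne hij.symm, hv, Units.val_mk0]
      ring
    rw [e1, e2]
    simp

lemma MilnorSymbol_swap (a : Fin n → Fˣ) {i j : Fin n} (hij : i ≠ j) (x y : Fˣ) :
    MilnorSymbol (Function.update (Function.update a i x) j y) =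
      -(MilnorSymbol (Function.update (Function.update a i y) j x) : MilnorK n F) := by
  have h0 := MilnorSymbol_self_neg a hij (x * y)
  rw [Function.update_comm hij, MilnorSymbol_mul,
    Function.update_comm hij.symm, Function.update_comm hij.symm] at h0
  have t1 : MilnorSymbol (Function.update (Function.update a i x) j (-(x * y))) =
      (0 : MilnorK n F) + MilnorSymbol (Function.update (Function.update a i x) j y) := by
    rw [show -(x * y) = (-x) * y from (neg_mul x y).symm, MilnorSymbol_mul,
      MilnorSymbol_self_neg a hij x]
  have t2 : MilnorSymbol (Function.update (Function.update a i y) j (-(x * y))) =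
      MilnorSymbol (Function.update (Function.update a i y) j x) + (0 : MilnorK n F) := by
    rw [show -(x * y) = x * (-y) from (mul_neg x y).symm, MilnorSymbol_mul,
      MilnorSymbol_self_neg a hij y]
  rw [t1, t2, zero_add, add_zero] at h0
  exact eq_neg_of_add_eq_zero_left h0

end Lemmas

/-- For a DVR `A` with fraction field `K` and uniformizer `π`, the group `K^M_n(K)` is
generated by symbols `{π, u_2, ..., u_n}` and `{u_1, ..., u_n}` with all `u_i ∈ Aˣ`. -/
theorem milnorK_generated_by_uniformizer_and_unit_symbols
    (A : Type*) [CommRing A] [IsDomain A] [IsDiscreteValuationRing A]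
    (K : Type*) [Field K] [Algebra A K] [IsFractionRing A K]
    (π : A) (hπ : Irreducible π) (n : ℕ) (hn : 0 < n) :
    AddSubgroup.closure
      { x : MilnorK n K | ∃ a : Fin n → Kˣ, x = MilnorSymbol a ∧
          ((∀ i, ∃ u : Aˣ, ((a i : K) = algebraMap A K u)) ∨
           (((a ⟨0, hn⟩ : K) = algebraMap A K π) ∧
            ∀ i, i ≠ ⟨0, hn⟩ → ∃ u : Aˣ, (a i : K) = algebraMap A K u)) } = ⊤ := by
  classical
  set i0 : Fin n := ⟨0, hn⟩ with hi0
  have inj : Function.Injective (algebraMap A K) := IsFractionRing.injective A K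
  have hπA0 : π ≠ 0 := hπ.ne_zero
  have hπ0 : algebraMap A K π ≠ 0 := fun h => hπA0 (inj (by rw [h, map_zero]))
  set p : Kˣ := Units.mk0 _ hπ0 with hp
  set φ : Aˣ →* Kˣ := Units.map (algebraMap A K : A →* K) with hφ
  have hφval : ∀ u : Aˣ, ((φ u : Kˣ) : K) = algebraMap A K u := fun u => rfl
  set S : Set (MilnorK n K) :=
      { x : MilnorK n K | ∃ a : Fin n → Kˣ, x = MilnorSymbol a ∧
          ((∀ i, ∃ u : Aˣ, ((a i : K) = algebraMap A K u)) ∨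
           (((a i0 : K) = algebraMap A K π) ∧
            ∀ i, i ≠ i0 → ∃ u : Aˣ, (a i : K) = algebraMap A K u)) } with hS
  set H := AddSubgroup.closure S with hH
  -- p is not of unit form
  have hpu : ∀ u : Aˣ, p ≠ φ u := by
    intro u h
    have : algebraMap A K π = algebraMap A K u := by
      rw [← hφval u, ← h]; rfl
    exact hπ.not_isUnit (inj this ▸ u.isUnit)
  -- every unit of K is p^m * φ u
  have rep : ∀ x : Kˣ, ∃ (m : ℤ) (u : Aˣ), x = p ^ m * φ u := by
    intro x
    obtain ⟨r, s, hs, hx⟩ := IsFractionRing.div_surjective (A := A) (x : K)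
    have hs0 : s ≠ 0 := nonZeroDivisors.ne_zero hs
    have hr0 : r ≠ 0 := by
      intro h; rw [h, map_zero, zero_div] at hx; exact x.ne_zero hx.symm
    obtain ⟨k, u1, hu1⟩ := IsDiscreteValuationRing.eq_unit_mul_pow_irreducible hr0 hπ
    obtain ⟨l, u2, hu2⟩ := IsDiscreteValuationRing.eq_unit_mul_pow_irreducible hs0 hπ
    refine ⟨(k : ℤ) - l, u1 * u2⁻¹, ?_⟩
    have hs0' : algebraMap A K s ≠ 0 := fun h => hs0 (inj (by rw [h, map_zero]))
    apply Units.ext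
    rw [Units.val_mul, map_mul, map_inv]
    rw [show ((p ^ ((k : ℤ) - l) : Kˣ) : K) = (algebraMap A K π) ^ ((k : ℤ) - l) by
      rw [Units.val_zpow_eq_zpow_val]; rfl]
    rw [Units.val_mul, Units.val_inv_eq_inv_val, hφval, hφval]
    have hu20 : algebraMap A K (u2 : A) ≠ 0 := fun h => u2.ne_zero (inj (by rw [h, map_zero]))
    rw [← hx, hu1, hu2, map_mul, map_mul, map_pow, map_pow]
    rw [zpow_sub₀ hπ0, zpow_natCast, zpow_natCast]
    field_simp
  have hm1 : (-1 : Kˣ) = φ (-1 : Aˣ) := by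
    apply Units.ext
    rw [hφval]
    simp
  -- symbols with entries p or units, ≤ m of them equal to p, are in H
  have R1 : ∀ m : ℕ, ∀ a : Fin n → Kˣ,
      (∀ i, a i = p ∨ ∃ u : Aˣ, a i = φ u) →
      (Finset.univ.filter (fun i => a i = p)).card ≤ m → MilnorSymbol a ∈ H := by
    intro m
    induction m with
    | zero =>
        intro a ha hcard
        have hecard : (Finset.univ.filter (fun i => a i = p)).card = 0 := Nat.le_zero.mp hcard
        have hunit : ∀ i, ∃ u : Aˣ, a i = φ u := by
          intro i
          rcases ha i with h | h
          · exfalso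
            have : i ∈ Finset.univ.filter (fun i => a i = p) := by
              simp [h]
            rw [Finset.card_eq_zero.mp hecard] at this
            simp at this
          · exact h
        apply AddSubgroup.subset_closure
        refine ⟨a, rfl, Or.inl fun i => ?_⟩
        obtain ⟨u, hu⟩ := hunit i
        exact ⟨u, by rw [hu, hφval]⟩
    | succ m ih =>
        intro a ha hcard
        set s := Finset.univ.filter (fun i => a i = p) with hsdef
        rcases Nat.lt_or_ge s.card 2 with hlt | hge
        · have hcases : s.card = 0 ∨ s.card = 1 := by omega
          rcases hcases with h | h
          · -- no p entries
            exact ih a ha (by rw [← hsdef]; omega)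
          · -- exactly one p entry
            obtain ⟨i, hi⟩ := Finset.card_eq_one.mp h
            have hip : a i = p := by
              have : i ∈ s := hi ▸ Finset.mem_singleton_self i
              simpa [hsdef] using this
            have hnotp : ∀ j, j ≠ i → a j ≠ p := by
              intro j hj hjp
              have : j ∈ s := by simp [hsdef, hjp]
              rw [hi] at this
              exact hj (Finset.mem_singleton.mp this)
            have hother : ∀ j, j ≠ i → ∃ u : Aˣ, a j = φ u := by
              intro j hj
              rcases ha j with h' | h'
              · exact absurd h' (hnotp j hj)
              · exact h'
            by_cases hii : i = i0
            · subst hii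
              apply AddSubgroup.subset_closure
              refine ⟨a, rfl, Or.inr ⟨by rw [hip]; rfl, fun j hj => ?_⟩⟩
              obtain ⟨u, hu⟩ := hother j hj
              exact ⟨u, by rw [hu, hφval]⟩
            · -- swap slots i and i0
              have hswap := MilnorSymbol_swap a (show i0 ≠ i from fun h => hii h.symm) (a i0) (a i)
              rw [Function.update_eq_self, Function.update_eq_self] at hswap
              rw [hswap]
              apply neg_mem
              apply AddSubgroup.subset_closure
              set a' := Function.update (Function.update a i0 (a i)) i (a i0) with ha'
              refine ⟨a', rfl, Or.inr ⟨?_, fun j hj => ?_⟩⟩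
              · have : a' i0 = a i := by
                  rw [ha', Function.update_of_ne (fun h => hii h.symm), Function.update_self]
                rw [this, hip]; rfl
              · by_cases hji : j = i
                · subst hji
                  obtain ⟨u, hu⟩ := hother i0 (fun h => hii h.symm)
                  refine ⟨u, ?_⟩
                  rw [ha', Function.update_self, hu, hφval]
                · have hval : a' j = a j := by
                    rw [ha', Function.update_of_ne hji, Function.update_of_ne hj]
                  obtain ⟨u, hu⟩ := hother j hji
                  exact ⟨u, by rw [hval, hu, hφval]⟩
        · -- at least two p entries
          obtain ⟨i, hi, j, hj, hij⟩ := Finset.one_lt_card.mp hge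
          have hip : a i = p := by simpa [hsdef] using hi
          have hjp : a j = p := by simpa [hsdef] using hj
          have key : MilnorSymbol a =
              (MilnorSymbol (Function.update a j (-1)) : MilnorK n K) := by
            have e0 : a = Function.update a j ((-1) * (-p)) := by
              rw [show ((-1 : Kˣ) * (-p)) = p by simp, ← hjp, Function.update_eq_self]
            have e1 : Function.update a j (-p) =
                Function.update (Function.update a i p) j (-p) := by
              rw [show Function.update a i p = a by rw [← hip, Function.update_eq_self]]
            conv_lhs => rw [e0]
            rw [MilnorSymbol_mul, e1, MilnorSymbol_self_neg a hij p, add_zero]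
          rw [key]
          apply ih
          · intro k
            by_cases hk : k = j
            · subst hk
              right
              exact ⟨-1, by rw [Function.update_self, hm1]⟩
            · rw [Function.update_of_ne hk]; exact ha k
          · have hsub : (Finset.univ.filter
                (fun k => Function.update a j (-1) k = p)) ⊆ s.erase j := by
              intro k hk
              simp only [Finset.mem_filter, Finset.mem_univ, true_and] at hk
              have hkj : k ≠ j := by
                intro h
                subst h
                rw [Function.update_self] at hk
                exact hpu (-1) (hk.symm.trans hm1)
              rw [Function.update_of_ne hkj] at hk
              exact Finset.mem_erase.mpr ⟨hkj, by simp [hsdef, hk]⟩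
            calc (Finset.univ.filter (fun k => Function.update a j (-1) k = p)).card
                ≤ (s.erase j).card := Finset.card_le_card hsub
              _ = s.card - 1 := Finset.card_erase_of_mem hj
              _ ≤ m := by omega
  -- all symbols are in H
  have R3 : ∀ (d k : ℕ), k + d = n → ∀ a : Fin n → Kˣ,
      (∀ i : Fin n, (i : ℕ) < k → (a i = p ∨ ∃ u : Aˣ, a i = φ u)) →
      MilnorSymbol a ∈ H := by
    intro d
    induction d with
    | zero =>
        intro k hk a ha
        apply R1 n a (fun i => ha i (by omega))
        calc (Finset.univ.filter (fun i => a i = p)).card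
            ≤ (Finset.univ : Finset (Fin n)).card := Finset.card_filter_le _ _
          _ = n := by simp
    | succ d ihd =>
        intro k hk a ha
        set ik : Fin n := ⟨k, by omega⟩ with hik
        obtain ⟨m, u, hmu⟩ := rep (a ik)
        have key : MilnorSymbol a =
            m • (MilnorSymbol (Function.update a ik p) : MilnorK n K) +
              MilnorSymbol (Function.update a ik (φ u)) := by
          conv_lhs => rw [show a = Function.update a ik (p ^ m * φ u) by
            rw [← hmu, Function.update_eq_self]]
          rw [MilnorSymbol_mul, MilnorSymbol_update_zpow]
        rw [key]
        have hgood : ∀ (x : Kˣ), (x = p ∨ ∃ u : Aˣ, x = φ u) →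
            ∀ i : Fin n, (i : ℕ) < k + 1 →
              (Function.update a ik x i = p ∨ ∃ u : Aˣ, Function.update a ik x i = φ u) := by
          intro x hx i hi
          by_cases hik' : i = ik
          · subst hik'; rw [Function.update_self]; exact hx
          · rw [Function.update_of_ne hik']
            apply ha
            have : (i : ℕ) ≠ k := fun h => hik' (Fin.ext h)
            omega
        refine AddSubgroup.add_mem _ (AddSubgroup.zsmul_mem _ ?_ m) ?_
        · exact ihd (k + 1) (by omega) _ (hgood p (Or.inl rfl))
        · exact ihd (k + 1) (by omega) _ (hgood (φ u) (Or.inr ⟨u, rfl⟩))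
  have hall : ∀ a : Fin n → Kˣ, MilnorSymbol a ∈ H :=
    fun a => R3 n 0 (by omega) a (fun i hi => absurd hi (by omega))
  rw [eq_top_iff]
  rintro x -
  induction x using QuotientAddGroup.induction_on with
  | H y =>
    induction y using FreeAbelianGroup.induction_on with
    | zero => exact zero_mem _
    | of a => exact hall a
    | neg a => exact neg_mem (hall a)
    | add y z hy hz => exact add_mem hy hz
end

section
/- Let A be a discrete valuation ring with fraction field K, uniformizer π, and residue field k, and let ∂ be the tame symbol and sp_π the specialisation map. Then for every α ∈ K^M_n(K), sp_π(α) = ∂({-π} · α), where {-π} · α denotes the product of the symbol {-π} ∈ K^M_1(K) with α in the Milnor K-ring. -/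
section Aux
variable {F : Type*} [Field F] {n : ℕ}

lemma MilnorSymbol.rel_mul (a : Fin n → Fˣ) (i : Fin n) (b : Fˣ) :
    (MilnorSymbol (Function.update a i (a i * b)) : MilnorK n F) =
      MilnorSymbol a + MilnorSymbol (Function.update a i b) := by
  have h : FreeAbelianGroup.of (Function.update a i (a i * b)) -
      FreeAbelianGroup.of a - FreeAbelianGroup.of (Function.update a i b) ∈
      AddSubgroup.closure (MilnorRelSet F n) :=
    AddSubgroup.subset_closure (Or.inl ⟨a, i, b, rfl⟩)
  have h2 := (QuotientAddGroup.eq_zero_iff _).2 h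
  rw [show FreeAbelianGroup.of (Function.update a i (a i * b)) -
      FreeAbelianGroup.of a - FreeAbelianGroup.of (Function.update a i b) =
      FreeAbelianGroup.of (Function.update a i (a i * b)) -
      (FreeAbelianGroup.of a + FreeAbelianGroup.of (Function.update a i b)) by ring] at h2
  rw [QuotientAddGroup.mk_sub, QuotientAddGroup.mk_add, sub_eq_zero] at h2
  exact h2

lemma MilnorSymbol.steinberg (a : Fin n → Fˣ) (i j : Fin n) (hij : i ≠ j)
    (h : ((a i : F) + (a j : F) = 1)) : (MilnorSymbol a : MilnorK n F) = 0 :=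
  (QuotientAddGroup.eq_zero_iff _).2 <|
    AddSubgroup.subset_closure (Or.inr ⟨a, i, j, hij, h, rfl⟩)

lemma MilnorSymbol.mul (a : Fin n → Fˣ) (i : Fin n) (x y : Fˣ) :
    (MilnorSymbol (Function.update a i (x * y)) : MilnorK n F) =
      MilnorSymbol (Function.update a i x) + MilnorSymbol (Function.update a i y) := by
  have := MilnorSymbol.rel_mul (Function.update a i x) i y
  simpa [Function.update_idem] using this

lemma MilnorSymbol.one (a : Fin n → Fˣ) (i : Fin n) :
    (MilnorSymbol (Function.update a i 1) : MilnorK n F) = 0 := by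
  have h := MilnorSymbol.mul a i 1 1
  simp only [one_mul] at h
  exact (left_eq_add.mp h)

lemma MilnorSymbol.inv (a : Fin n → Fˣ) (i : Fin n) (x : Fˣ) :
    (MilnorSymbol (Function.update a i x⁻¹) : MilnorK n F) =
      -MilnorSymbol (Function.update a i x) := by
  have h := MilnorSymbol.mul a i x x⁻¹
  rw [mul_inv_cancel, MilnorSymbol.one a i] at h
  exact eq_neg_of_add_eq_zero_right h.symm

lemma MilnorSymbol.zpow (a : Fin n → Fˣ) (i : Fin n) (x : Fˣ) (m : ℤ) :
    (MilnorSymbol (Function.update a i (x ^ m)) : MilnorK n F) =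
      m • MilnorSymbol (Function.update a i x) := by
  induction m using Int.induction_on with
  | zero => simpa using MilnorSymbol.one a i
  | succ k ih =>
      rw [zpow_add_one, MilnorSymbol.mul a i (x ^ (k:ℤ)) x, ih, add_smul, one_smul]
  | pred k ih =>
      rw [zpow_sub_one, MilnorSymbol.mul a i (x ^ (-k:ℤ)) x⁻¹, ih, MilnorSymbol.inv a i x,
        sub_smul, one_smul, sub_eq_add_neg]

lemma MilnorSymbol.neg_pair (b : Fin n → Fˣ) (i j : Fin n) (hij : i ≠ j)
    (h : b j = -(b i)) : (MilnorSymbol b : MilnorK n F) = 0 := by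
  set x := b i with hx
  by_cases h1 : (x : F) = 1
  · have hx1 : b i = 1 := Units.ext h1
    have hupd : Function.update b i (1 : Fˣ) = b := by
      rw [← hx1]; exact Function.update_eq_self i b
    rw [← hupd]; exact MilnorSymbol.one b i
  · have hy1 : (1 : F) - x ≠ 0 := sub_ne_zero.mpr (Ne.symm h1)
    have hy2 : (1 : F) - (x⁻¹ : Fˣ) ≠ 0 := by
      rw [sub_ne_zero]
      intro hc
      apply h1
      have hxx : (x : F) * ((x⁻¹ : Fˣ) : F) = 1 := by
        rw [← Units.val_mul, mul_inv_cancel, Units.val_one]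
      rw [← hc, mul_one] at hxx
      exact hxx
    set y1 : Fˣ := Units.mk0 _ hy1 with hy1def
    set y2 : Fˣ := Units.mk0 _ hy2 with hy2def
    have hxm1 : (x : F) - 1 ≠ 0 := sub_ne_zero.mpr h1
    have key : b j = y1 * y2⁻¹ := by
      apply Units.ext
      rw [h]
      have hx0 : (x : F) ≠ 0 := Units.ne_zero x
      have hy2' : (1 : F) - (x : F)⁻¹ ≠ 0 := by
        rwa [Units.val_inv_eq_inv_val] at hy2
      push_cast [Units.val_inv_eq_inv_val, hy1def, hy2def]
      rw [Units.val_mk0, Units.val_mk0]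
      field_simp
      ring
    have hbj : b = Function.update b j (y1 * y2⁻¹) := by
      rw [← key]; exact (Function.update_eq_self j b).symm
    have e1 : (MilnorSymbol (Function.update b j y1) : MilnorK n F) = 0 := by
      apply MilnorSymbol.steinberg _ i j hij
      rw [Function.update_self, Function.update_of_ne hij]
      simp [hy1def, ← hx]
    have hbi : (Function.update b j y2) i = x := by
      rw [Function.update_of_ne hij, hx]
    have e2 : (MilnorSymbol (Function.update b j y2) : MilnorK n F) = 0 := by
      have st : (MilnorSymbol (Function.update (Function.update b j y2) i x⁻¹) :
          MilnorK n F) = 0 := by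
        apply MilnorSymbol.steinberg _ i j hij
        rw [Function.update_self, Function.update_of_ne (Ne.symm hij), Function.update_self]
        simp [hy2def, Units.val_inv_eq_inv_val]
      have inv := MilnorSymbol.inv (Function.update b j y2) i x
      have idem : Function.update (Function.update b j y2) i x = Function.update b j y2 := by
        rw [← hbi]; exact Function.update_eq_self i _
      rw [idem, st] at inv
      exact (neg_eq_zero.mp inv.symm)
    rw [hbj, MilnorSymbol.mul b j y1 y2⁻¹, e1, MilnorSymbol.inv b j y2, e2, neg_zero, add_zero]

end Aux

/-- The homomorphism `MilnorK n F →+ MilnorK (n+1) F` prepending a fixed unit `q`. -/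
def MilnorConsHom (F : Type*) [Field F] (n : ℕ) (q : Fˣ) :
    MilnorK n F →+ MilnorK (n + 1) F :=
  QuotientAddGroup.lift _
    ((QuotientAddGroup.mk' _).comp
      (FreeAbelianGroup.lift (fun a => FreeAbelianGroup.of (Fin.cons q a)))) (by
    intro x hx
    refine AddSubgroup.closure_le _ |>.2 ?_ hx
    rintro y (⟨a, i, b, rfl⟩ | ⟨a, i, j, hij, hsum, rfl⟩) <;>
      simp only [SetLike.mem_coe, AddMonoidHom.mem_ker, AddMonoidHom.comp_apply, map_sub,
        FreeAbelianGroup.lift_apply_of, QuotientAddGroup.mk'_apply]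
    · show (MilnorSymbol (Fin.cons q (Function.update a i (a i * b))) : MilnorK (n+1) F) -
        MilnorSymbol (Fin.cons q a) - MilnorSymbol (Fin.cons q (Function.update a i b)) = 0
      rw [Fin.cons_update, Fin.cons_update]
      have := MilnorSymbol.rel_mul (Fin.cons q a) i.succ b
      rw [Fin.cons_succ] at this
      rw [this]; abel
    · show (MilnorSymbol (Fin.cons q a) : MilnorK (n+1) F) = 0
      exact MilnorSymbol.steinberg _ i.succ j.succ
        (fun hc => hij (Fin.succ_injective _ hc))
        (by rw [Fin.cons_succ, Fin.cons_succ]; exact hsum))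

lemma MilnorConsHom_symbol {F : Type*} [Field F] {n : ℕ} (q : Fˣ) (a : Fin n → Fˣ) :
    MilnorConsHom F n q (MilnorSymbol a) = MilnorSymbol (Fin.cons q a) := by
  simp [MilnorConsHom, MilnorSymbol, QuotientAddGroup.mk'_apply]
  rfl

/-- every unit of the fraction field of a DVR is a power of the uniformizer times a unit. -/
lemma exists_unit_rep {A : Type*} [CommRing A] [IsDomain A] [IsDiscreteValuationRing A]
    {K : Type*} [Field K] [Algebra A K] [IsFractionRing A K]
    {π : A} (hπ : Irreducible π) {p : Kˣ} (hp : (p : K) = algebraMap A K π) (x : Kˣ) :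
    ∃ (m : ℤ) (u : Aˣ), x = p ^ m * Units.map (algebraMap A K).toMonoidHom u := by
  obtain ⟨r, s, hs, hrs⟩ := IsFractionRing.div_surjective (A := A) (x : K)
  have hs0 : s ≠ 0 := nonZeroDivisors.ne_zero hs
  have hsK : algebraMap A K s ≠ 0 := by
    simpa using (map_ne_zero_iff _ (IsFractionRing.injective A K)).2 hs0
  have hr0 : r ≠ 0 := by
    rintro rfl
    rw [map_zero, zero_div] at hrs
    exact (Units.ne_zero x) hrs.symm
  obtain ⟨nr, ur, hur⟩ := IsDiscreteValuationRing.eq_unit_mul_pow_irreducible hr0 hπ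
  obtain ⟨ns, us, hus⟩ := IsDiscreteValuationRing.eq_unit_mul_pow_irreducible hs0 hπ
  have hπ0 : algebraMap A K π ≠ 0 := by
    simpa using (map_ne_zero_iff _ (IsFractionRing.injective A K)).2 hπ.ne_zero
  refine ⟨(nr : ℤ) - ns, ur * us⁻¹, Units.ext ?_⟩
  push_cast [Units.val_zpow_eq_zpow_val, hp]
  rw [← hrs, hur, hus]
  push_cast
  rw [zpow_sub₀ hπ0, zpow_natCast, zpow_natCast]
  have hus0 : (algebraMap A K) (us : A) ≠ 0 := by
    simpa using (map_ne_zero_iff _ (IsFractionRing.injective A K)).2 (Units.ne_zero us)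
  have husinv : (algebraMap A K) ((us⁻¹ : Aˣ) : A) = ((algebraMap A K) (us : A))⁻¹ := by
    refine eq_inv_of_mul_eq_one_left ?_
    rw [← map_mul]
    simp
  simp only [Units.coe_map, RingHom.toMonoidHom_eq_coe, MonoidHom.coe_coe, Units.val_mul, map_mul, husinv]
  field_simp [husinv]

/-- For a DVR `A` with fraction field `K`, uniformizer `π` and residue field `k`, the
specialisation map satisfies `sp_π(α) = ∂({-π}·α)`: multiplication by the symbol `{-π}`
is realised by a homomorphism `L` sending `{a_1, ..., a_n}` to `{-π, a_1, ..., a_n}`,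
and `sp_π = ∂ ∘ L`. -/
theorem specialisation_eq_tame_symbol_mul_neg_uniformizer
    (A : Type*) [CommRing A] [IsDomain A] [IsDiscreteValuationRing A]
    (K : Type*) [Field K] [Algebra A K] [IsFractionRing A K]
    (π : A) (hπ : Irreducible π) (p : Kˣ) (hp : (p : K) = algebraMap A K π) (n : ℕ)
    (D : MilnorK (n + 1) K →+ MilnorK n (IsLocalRing.ResidueField A))
    (hD1 : ∀ u : Fin n → Aˣ,
      D (MilnorSymbol (Fin.cons p
          (fun i => Units.map (algebraMap A K).toMonoidHom (u i)))) =
        MilnorSymbol (fun i => Units.map (IsLocalRing.residue A).toMonoidHom (u i)))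
    (hD2 : ∀ u : Fin (n + 1) → Aˣ,
      D (MilnorSymbol (fun i => Units.map (algebraMap A K).toMonoidHom (u i))) = 0)
    (sp : MilnorK n K →+ MilnorK n (IsLocalRing.ResidueField A))
    (hsp : ∀ (m : Fin n → ℤ) (u : Fin n → Aˣ),
      sp (MilnorSymbol (fun i => p ^ (m i) * Units.map (algebraMap A K).toMonoidHom (u i))) =
        MilnorSymbol (fun i => Units.map (IsLocalRing.residue A).toMonoidHom (u i))) :
    ∃ L : MilnorK n K →+ MilnorK (n + 1) K,
      (∀ a : Fin n → Kˣ, L (MilnorSymbol a) = MilnorSymbol (Fin.cons (-p) a)) ∧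
      ∀ α : MilnorK n K, sp α = D (L α) := by
  classical
  refine ⟨MilnorConsHom K n (-p), fun a => MilnorConsHom_symbol (-p) a, ?_⟩
  set L := MilnorConsHom K n (-p) with hLdef
  have hL : ∀ a : Fin n → Kˣ, L (MilnorSymbol a) = MilnorSymbol (Fin.cons (-p) a) :=
    fun a => MilnorConsHom_symbol (-p) a
  -- slot replacement lemma
  have slot : ∀ (c : Fin (n + 1) → Kˣ), c 0 = -p → ∀ (i : Fin n) (m : ℤ) (w : Kˣ),
      (MilnorSymbol (Function.update c i.succ (p ^ m * w)) : MilnorK (n+1) K) =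
        MilnorSymbol (Function.update c i.succ w) := by
    intro c hc i m w
    rw [MilnorSymbol.mul c i.succ (p ^ m) w]
    have h0 : (MilnorSymbol (Function.update c i.succ p) : MilnorK (n+1) K) = 0 := by
      apply MilnorSymbol.neg_pair _ i.succ 0 (Fin.succ_ne_zero i)
      rw [Function.update_of_ne (Ne.symm (Fin.succ_ne_zero i)), Function.update_self, hc]
    rw [MilnorSymbol.zpow c i.succ p m, h0, smul_zero, zero_add]
  -- the key computation on symbols
  have key : ∀ a : Fin n → Kˣ, sp (MilnorSymbol a) = D (L (MilnorSymbol a)) := by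
    intro a
    choose m u hmu using fun i => exists_unit_rep hπ hp (a i)
    set v : Fin n → Kˣ := fun i => Units.map (algebraMap A K).toMonoidHom (u i) with hv
    have ha : a = fun i => p ^ (m i) * v i := funext hmu
    have step : ∀ s : Finset (Fin n),
        (MilnorSymbol (Fin.cons (-p) (s.piecewise a v)) : MilnorK (n+1) K) =
          MilnorSymbol (Fin.cons (-p) v) := by
      intro s
      induction s using Finset.induction_on with
      | empty => rw [Finset.piecewise_empty]
      | @insert j s hj ih =>
        rw [Finset.piecewise_insert, Fin.cons_update, hmu j,
          slot (Fin.cons (-p) (s.piecewise a v)) (Fin.cons_zero _ _) j (m j) (v j),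
          ← Fin.cons_update]
        have hvj : (s.piecewise a v) j = v j := Finset.piecewise_eq_of_notMem _ _ _ hj
        rw [← hvj, Function.update_eq_self]
        exact ih
    have hcons : (MilnorSymbol (Fin.cons (-p) a) : MilnorK (n+1) K) =
        MilnorSymbol (Fin.cons (-p) v) := by
      have := step Finset.univ
      rwa [Finset.piecewise_univ] at this
    have hsplit : (MilnorSymbol (Fin.cons (-p) v) : MilnorK (n+1) K) =
        MilnorSymbol (Fin.cons (-1 : Kˣ) v) + MilnorSymbol (Fin.cons p v) := by
      have h := MilnorSymbol.mul (Fin.cons (-p) v) 0 (-1 : Kˣ) p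
      rw [Fin.update_cons_zero, Fin.update_cons_zero, Fin.update_cons_zero, neg_one_mul] at h
      exact h
    have hneg1 : D (MilnorSymbol (Fin.cons (-1 : Kˣ) v)) = 0 := by
      have hfun : (fun i => Units.map (algebraMap A K).toMonoidHom ((Fin.cons (-1 : Aˣ) u : Fin (n+1) → Aˣ) i)) =
          Fin.cons (-1 : Kˣ) v := by
        funext i
        refine Fin.cases ?_ (fun k => ?_) i
        · rw [Fin.cons_zero, Fin.cons_zero]
          apply Units.ext
          simp
        · rw [Fin.cons_succ, Fin.cons_succ]
      rw [← hfun]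
      exact hD2 (Fin.cons (-1 : Aˣ) u)
    have spa : sp (MilnorSymbol a) =
        MilnorSymbol (fun i => Units.map (IsLocalRing.residue A).toMonoidHom (u i)) := by
      rw [ha]; exact hsp m u
    rw [spa, hL a, hcons, hsplit, map_add, hneg1, zero_add, hD1 u]
  -- extend from symbols to all of MilnorK
  intro α
  obtain ⟨x, rfl⟩ := QuotientAddGroup.mk_surjective (α : MilnorK n K)
  refine FreeAbelianGroup.induction_on x ?_ ?_ ?_ ?_
  · show sp (QuotientAddGroup.mk 0) = D (L (QuotientAddGroup.mk 0))
    exact (map_zero sp).trans ((congrArg D (map_zero L)).trans (map_zero D)).symm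
  · intro a; exact key a
  · intro a h
    show sp (QuotientAddGroup.mk (-FreeAbelianGroup.of a)) =
      D (L (QuotientAddGroup.mk (-FreeAbelianGroup.of a)))
    exact (map_neg sp (MilnorSymbol a)).trans ((congrArg Neg.neg (key a)).trans
      ((congrArg D (map_neg L (MilnorSymbol a))).trans (map_neg D _)).symm)
  · intro x y hx hy
    show sp (QuotientAddGroup.mk (x + y)) = D (L (QuotientAddGroup.mk (x + y)))
    exact (map_add sp (QuotientAddGroup.mk x : MilnorK n K) (QuotientAddGroup.mk y)).trans
      ((congrArg₂ (· + ·) hx hy).trans ((congrArg D (map_add L _ _)).trans (map_add D _ _)).symm)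
end
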